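/- An elementary cellular automaton F_N is positively expansive if and only if it is both left-permutive and right-permutive. -/

import Mathlib

/-- Cantor metric on configurations `ℤ → Bool`. -/
noncomputable def dC (x y : ℤ → Bool) : ℝ :=
  ∑' i : ℤ, if x i = y i then 0 else (1 / 2 : ℝ) ^ i.natAbs

/-- Local rule of the ECA with rule number `N`:
`(a,b,c)` is mapped to the coefficient of `2^(4a+2b+c)` in the binary expansion of `N`. -/
def localRule (N : ℕ) (a b c : Bool) : Bool :=
  N.testBit (4 * a.toNat + 2 * b.toNat + c.toNat)

/-- The elementary cellular automaton with rule number `N`. -/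
def eca (N : ℕ) (x : ℤ → Bool) : ℤ → Bool :=
  fun i => localRule N (x (i - 1)) (x i) (x (i + 1))

/-- `x` belongs to the cylinder `[u]_0`. -/
def inCyl (u : List Bool) (x : ℤ → Bool) : Prop :=
  ∀ j : Fin u.length, x ((j : ℕ) : ℤ) = u.get j

/-- `u` is an `m`-blocking word for `F`. -/
def Blocking (F : (ℤ → Bool) → ℤ → Bool) (m : ℕ) (u : List Bool) : Prop :=
  m ≤ u.length ∧ ∃ q : ℕ, q + m ≤ u.length ∧
    ∀ x y : ℤ → Bool, inCyl u x → inCyl u y → ∀ n : ℕ, ∀ j : ℤ,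
      (q : ℤ) ≤ j → j < (q : ℤ) + (m : ℤ) → F^[n] x j = F^[n] y j

/-- `x` is an equicontinuity point of `F`. -/
def EquicontinuityPoint (F : (ℤ → Bool) → ℤ → Bool) (x : ℤ → Bool) : Prop :=
  ∀ ε : ℝ, 0 < ε → ∃ δ : ℝ, 0 < δ ∧ ∀ y : ℤ → Bool, dC x y < δ →
    ∀ n : ℕ, dC (F^[n] x) (F^[n] y) < ε

/-- `F` is almost equicontinuous: it has at least one equicontinuity point. -/
def AlmostEquicontinuousCA (F : (ℤ → Bool) → ℤ → Bool) : Prop :=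
  ∃ x : ℤ → Bool, EquicontinuityPoint F x

/-- `F` is equicontinuous: every point is an equicontinuity point. -/
def EquicontinuousCA (F : (ℤ → Bool) → ℤ → Bool) : Prop :=
  ∀ x : ℤ → Bool, EquicontinuityPoint F x

/-- `F` is sensitive to initial conditions. -/
def SensitiveCA (F : (ℤ → Bool) → ℤ → Bool) : Prop :=
  ∃ ε : ℝ, 0 < ε ∧ ∀ x : ℤ → Bool, ∀ δ : ℝ, 0 < δ →
    ∃ y : ℤ → Bool, dC x y < δ ∧ ∃ n : ℕ, ε ≤ dC (F^[n] x) (F^[n] y)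

/-- `F` is positively expansive. -/
def PosExpansiveCA (F : (ℤ → Bool) → ℤ → Bool) : Prop :=
  ∃ ε : ℝ, 0 < ε ∧ ∀ x y : ℤ → Bool, x ≠ y →
    ∃ n : ℕ, ε ≤ dC (F^[n] x) (F^[n] y)

/-- The power `σ^q` of the shift map, for `q : ℤ` : `(σ^q x)_i = x_{i+q}`. -/
def shiftBy (q : ℤ) (x : ℤ → Bool) : ℤ → Bool := fun i => x (i + q)

/-- `F` is left-permutive. -/
def LeftPermutive (N : ℕ) : Prop :=
  ∀ b c : Bool, Function.Bijective (fun a => localRule N a b c)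

/-- `F` is right-permutive. -/
def RightPermutive (N : ℕ) : Prop :=
  ∀ a b : Bool, Function.Bijective (fun c => localRule N a b c)

/-- `U` is open in the Cantor metric topology. -/
def IsOpenC (U : Set (ℤ → Bool)) : Prop :=
  ∀ x ∈ U, ∃ δ : ℝ, 0 < δ ∧ ∀ y : ℤ → Bool, dC x y < δ → y ∈ U

/-- `F` is topologically transitive. -/
def TransitiveCA (F : (ℤ → Bool) → ℤ → Bool) : Prop :=
  ∀ U V : Set (ℤ → Bool), IsOpenC U → IsOpenC V → U.Nonempty → V.Nonempty →
    ∃ n : ℕ, 0 < n ∧ ((F^[n]) '' U ∩ V).Nonempty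

lemma summable_base : Summable (fun i : ℤ => (1 / 2 : ℝ) ^ i.natAbs) := by
  apply Summable.of_nat_of_neg <;>
    simpa using summable_geometric_of_lt_one (by norm_num) (by norm_num : (1/2:ℝ) < 1)

lemma dC_term_nonneg (x y : ℤ → Bool) (i : ℤ) :
    0 ≤ (if x i = y i then 0 else (1 / 2 : ℝ) ^ i.natAbs) := by
  split <;> positivity

lemma dC_term_le (x y : ℤ → Bool) (i : ℤ) :
    (if x i = y i then 0 else (1 / 2 : ℝ) ^ i.natAbs) ≤ (1 / 2 : ℝ) ^ i.natAbs := by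
  split
  · positivity
  · exact le_refl _

lemma dC_summable (x y : ℤ → Bool) :
    Summable (fun i : ℤ => if x i = y i then 0 else (1 / 2 : ℝ) ^ i.natAbs) :=
  Summable.of_nonneg_of_le (dC_term_nonneg x y) (dC_term_le x y) summable_base

lemma dC_nonneg (x y : ℤ → Bool) : 0 ≤ dC x y :=
  tsum_nonneg (dC_term_nonneg x y)

lemma dC_self (x : ℤ → Bool) : dC x x = 0 := by
  simp [dC]

lemma dC_lower (x y : ℤ → Bool) (i : ℤ) (h : x i ≠ y i) :
    (1 / 2 : ℝ) ^ i.natAbs ≤ dC x y := by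
  have h2 := Summable.le_tsum (dC_summable x y) i (fun j _ => dC_term_nonneg x y j)
  rw [if_neg h] at h2
  exact h2

/-- if `x` and `y` agree at all `i < M`, then `dC x y ≤ 2 * (1/2)^M`. -/
lemma dC_le_right (x y : ℤ → Bool) (M : ℕ) (h : ∀ i : ℤ, i < (M : ℤ) → x i = y i) :
    dC x y ≤ 2 * (1 / 2 : ℝ) ^ M := by
  have hle : dC x y ≤ ∑' i : ℤ, (if (M:ℤ) ≤ i then (1 / 2 : ℝ) ^ i.natAbs else 0) := by
    refine Summable.tsum_le_tsum ?_ (dC_summable x y) ?_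
    · intro i
      by_cases hi : (M:ℤ) ≤ i
      · rw [if_pos hi]; exact dC_term_le x y i
      · rw [if_neg hi, if_pos (h i (by omega))]
    · apply Summable.of_nonneg_of_le _ _ summable_base
      · intro i; split <;> positivity
      · intro i; split
        · exact le_refl _
        · positivity
  have hre : (∑' i : ℤ, (if (M:ℤ) ≤ i then (1 / 2 : ℝ) ^ i.natAbs else 0))
      = ∑' j : ℕ, (1 / 2 : ℝ) ^ (M + j) := by
    rw [← Function.Injective.tsum_eq (f := fun i : ℤ => if (M:ℤ) ≤ i then (1 / 2 : ℝ) ^ i.natAbs else 0)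
      (g := fun j : ℕ => (M : ℤ) + j) (fun a b hab => by simp only at hab; omega)]
    · apply tsum_congr; intro j
      rw [if_pos (by omega)]
      have hna : ((M:ℤ) + (j:ℤ)).natAbs = M + j := by omega
      rw [hna]
    · intro i hi
      rw [Function.mem_support] at hi
      by_contra hcon
      exact hi (if_neg (fun hMi => hcon ⟨(i - M).toNat, by simp only; omega⟩))
  have hgeo : (∑' j : ℕ, (1 / 2 : ℝ) ^ (M + j)) = 2 * (1 / 2 : ℝ) ^ M := by
    have : ∀ j : ℕ, (1 / 2 : ℝ) ^ (M + j) = (1 / 2 : ℝ) ^ M * (1 / 2 : ℝ) ^ j := by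
      intro j; rw [pow_add]
    rw [tsum_congr this, tsum_mul_left, tsum_geometric_two]
    ring
  calc dC x y ≤ _ := hle
    _ = _ := hre
    _ = _ := hgeo

/-- if `x` and `y` agree at all `i > -M`, then `dC x y ≤ 2 * (1/2)^M`. -/
lemma dC_le_left (x y : ℤ → Bool) (M : ℕ) (h : ∀ i : ℤ, -(M : ℤ) < i → x i = y i) :
    dC x y ≤ 2 * (1 / 2 : ℝ) ^ M := by
  have hle : dC x y ≤ ∑' i : ℤ, (if i ≤ -(M:ℤ) then (1 / 2 : ℝ) ^ i.natAbs else 0) := by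
    refine Summable.tsum_le_tsum ?_ (dC_summable x y) ?_
    · intro i
      by_cases hi : i ≤ -(M:ℤ)
      · rw [if_pos hi]; exact dC_term_le x y i
      · rw [if_neg hi, if_pos (h i (by omega))]
    · apply Summable.of_nonneg_of_le _ _ summable_base
      · intro i; split <;> positivity
      · intro i; split
        · exact le_refl _
        · positivity
  have hre : (∑' i : ℤ, (if i ≤ -(M:ℤ) then (1 / 2 : ℝ) ^ i.natAbs else 0))
      = ∑' j : ℕ, (1 / 2 : ℝ) ^ (M + j) := by
    rw [← Function.Injective.tsum_eq (f := fun i : ℤ => if i ≤ -(M:ℤ) then (1 / 2 : ℝ) ^ i.natAbs else 0)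
      (g := fun j : ℕ => -(M : ℤ) - j) (fun a b hab => by simp only at hab; omega)]
    · apply tsum_congr; intro j
      rw [if_pos (by omega)]
      have hna : (-(M:ℤ) - (j:ℤ)).natAbs = M + j := by omega
      rw [hna]
    · intro i hi
      rw [Function.mem_support] at hi
      by_contra hcon
      exact hi (if_neg (fun hMi => hcon ⟨(-(M:ℤ) - i).toNat, by simp only; omega⟩))
  have hgeo : (∑' j : ℕ, (1 / 2 : ℝ) ^ (M + j)) = 2 * (1 / 2 : ℝ) ^ M := by
    have : ∀ j : ℕ, (1 / 2 : ℝ) ^ (M + j) = (1 / 2 : ℝ) ^ M * (1 / 2 : ℝ) ^ j := by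
      intro j; rw [pow_add]
    rw [tsum_congr this, tsum_mul_left, tsum_geometric_two]
    ring
  calc dC x y ≤ _ := hle
    _ = _ := hre
    _ = _ := hgeo

lemma biperm_window (N : ℕ) (hL : LeftPermutive N) (hR : RightPermutive N)
    (x y : ℤ → Bool) (h : ∀ n : ℕ, (eca N)^[n] x 0 = (eca N)^[n] y 0 ∧
      (eca N)^[n] x 1 = (eca N)^[n] y 1) : x = y := by
  have key : ∀ k : ℕ, ∀ n : ℕ, ∀ i : ℤ, -(k:ℤ) ≤ i → i ≤ (k:ℤ) + 1 →
      (eca N)^[n] x i = (eca N)^[n] y i := by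
    intro k
    induction k with
    | zero =>
      intro n i h0 h1
      interval_cases i
      · exact (h n).1
      · exact (h n).2
    | succ k ih =>
      intro n i h0 h1
      by_cases hlo : -(k:ℤ) ≤ i
      · by_cases hhi : i ≤ (k:ℤ) + 1
        · exact ih n i hlo hhi
        · -- i = k + 2, use right permutivity
          have hi : i = (k:ℤ) + 2 := by omega
          subst hi
          set u := (eca N)^[n] x with hu
          set v := (eca N)^[n] y with hv
          have hstep : eca N u ((k:ℤ)+1) = eca N v ((k:ℤ)+1) := by
            have := ih (n+1) ((k:ℤ)+1) (by omega) (by omega)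
            rwa [Function.iterate_succ_apply', Function.iterate_succ_apply'] at this
          have e1 : u ((k:ℤ)+1-1) = v ((k:ℤ)+1-1) := ih n _ (by omega) (by omega)
          have e2 : u ((k:ℤ)+1) = v ((k:ℤ)+1) := ih n _ (by omega) (by omega)
          unfold eca at hstep
          rw [e1, e2] at hstep
          have := (hR (v ((k:ℤ)+1-1)) (v ((k:ℤ)+1))).1 hstep
          rw [show (k:ℤ)+2 = (k:ℤ)+1+1 by ring]
          simpa using this
      · -- i = -(k+1), use left permutivity
        have hi : i = -((k:ℤ)+1) := by omega
        subst hi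
        set u := (eca N)^[n] x with hu
        set v := (eca N)^[n] y with hv
        have hstep : eca N u (-(k:ℤ)) = eca N v (-(k:ℤ)) := by
          have := ih (n+1) (-(k:ℤ)) (by omega) (by omega)
          rwa [Function.iterate_succ_apply', Function.iterate_succ_apply'] at this
        have e2 : u (-(k:ℤ)) = v (-(k:ℤ)) := ih n _ (by omega) (by omega)
        have e3 : u (-(k:ℤ)+1) = v (-(k:ℤ)+1) := ih n _ (by omega) (by omega)
        unfold eca at hstep
        rw [e2, e3] at hstep
        have := (hL (v (-(k:ℤ))) (v (-(k:ℤ)+1))).1 hstep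
        have h4 : -(k:ℤ) - 1 = -((k:ℤ)+1) := by ring
        rw [h4] at this
        simpa using this
  funext i
  have := key (i.natAbs) 0 i (by omega) (by omega)
  simpa using this

/-- the configuration given by word `L` placed at `[m, m + L.length)`, `false` elsewhere. -/
def mkCfg (m : ℤ) (L : List Bool) : ℤ → Bool :=
  fun i => if m ≤ i then L.getD (i - m).toNat false else false

lemma mkCfg_at (m : ℤ) (L : List Bool) (k : ℕ) : mkCfg m L (m + k) = L.getD k false := by
  unfold mkCfg
  rw [if_pos (by omega)]
  congr 1
  omega

/-- Mechanism B : a pair of configurations differing on a finite window that merge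
in one step. -/
lemma notPosExp_B (N : ℕ) (L1 L2 : List Bool)
    (hagree : ∀ k : ℕ, k ≠ 2 → k ≠ 3 → k ≠ 4 → L1.getD k false = L2.getD k false)
    (hne : ∃ k : ℕ, k < 7 ∧ L1.getD k false ≠ L2.getD k false)
    (hstep : ∀ k : ℕ, k < 5 → localRule N (L1.getD k false) (L1.getD (k+1) false)
      (L1.getD (k+2) false) = localRule N (L2.getD k false) (L2.getD (k+1) false)
      (L2.getD (k+2) false)) :
    ¬ PosExpansiveCA (eca N) := by
  rintro ⟨ε, hε, hx⟩
  obtain ⟨M, hM⟩ : ∃ M : ℕ, (1/2:ℝ) ^ M < ε / 2 :=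
    exists_pow_lt_of_lt_one (by positivity) (by norm_num)
  set z := mkCfg (M : ℤ) L1 with hz
  set y := mkCfg (M : ℤ) L2 with hy
  -- agreement off the centre
  have hag : ∀ i : ℤ, i < (M:ℤ) + 2 ∨ (M:ℤ) + 4 < i → z i = y i := by
    intro i hi
    by_cases him : (M:ℤ) ≤ i
    · obtain ⟨k, hk⟩ : ∃ k : ℕ, i = (M:ℤ) + k := ⟨(i - M).toNat, by omega⟩
      subst hk
      rw [hz, hy, mkCfg_at, mkCfg_at]
      exact hagree k (by omega) (by omega) (by omega)
    · rw [hz, hy]; unfold mkCfg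
      rw [if_neg him, if_neg him]
  have hzy : z ≠ y := by
    obtain ⟨k, hk7, hk⟩ := hne
    intro hcon
    apply hk
    have := congrFun hcon ((M:ℤ) + k)
    rwa [hz, hy, mkCfg_at, mkCfg_at] at this
  -- one-step merging
  have hF : eca N z = eca N y := by
    funext i
    by_cases hmid : (M:ℤ) + 1 ≤ i ∧ i ≤ (M:ℤ) + 5
    · obtain ⟨k, hk5, hik⟩ : ∃ k : ℕ, k < 5 ∧ i = (M:ℤ) + 1 + k :=
        ⟨(i - M - 1).toNat, by omega, by omega⟩
      subst hik
      show localRule N (z ((M:ℤ)+1+k-1)) (z ((M:ℤ)+1+k)) (z ((M:ℤ)+1+k+1))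
        = localRule N (y ((M:ℤ)+1+k-1)) (y ((M:ℤ)+1+k)) (y ((M:ℤ)+1+k+1))
      have e1 : (M:ℤ)+((k+1:ℕ):ℤ)-1 = (M:ℤ) + (k:ℕ) := by push_cast; omega
      have e2 : (M:ℤ)+1+k = (M:ℤ) + ((k+1:ℕ):ℤ) := by push_cast; omega
      have e3 : (M:ℤ)+1+k+1 = (M:ℤ) + ((k+2:ℕ):ℤ) := by push_cast; omega
      rw [e3, e2, e1, hz, hy, mkCfg_at, mkCfg_at, mkCfg_at, mkCfg_at, mkCfg_at, mkCfg_at]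
      exact hstep k hk5
    · show localRule N (z (i-1)) (z i) (z (i+1)) = localRule N (y (i-1)) (y i) (y (i+1))
      rw [hag (i-1) (by omega), hag i (by omega), hag (i+1) (by omega)]
  obtain ⟨n, hn⟩ := hx z y hzy
  rcases n with _ | n
  · simp only [Function.iterate_zero, id_eq] at hn
    have : dC z y ≤ 2 * (1/2:ℝ)^M := dC_le_right z y M (fun i hi => hag i (Or.inl (by omega)))
    nlinarith
  · have : (eca N)^[n+1] z = (eca N)^[n+1] y := by
      rw [Function.iterate_succ_apply, Function.iterate_succ_apply, hF]
    rw [this, dC_self] at hn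
    linarith

/-- one step of the ECA on spatially `6`-periodic patterns. -/
def stepP (N : ℕ) (W : ZMod 6 → Bool) : ZMod 6 → Bool :=
  fun r => localRule N (W (r - 1)) (W r) (W (r + 1))

/-- the `6`-periodic configuration with pattern `W`. -/
def perCfg (W : ZMod 6 → Bool) : ℤ → Bool := fun i => W (i : ZMod 6)

lemma eca_perCfg (N : ℕ) (W : ZMod 6 → Bool) :
    eca N (perCfg W) = perCfg (stepP N W) := by
  funext i
  show localRule N (perCfg W (i-1)) (perCfg W i) (perCfg W (i+1)) = _
  unfold perCfg stepP
  push_cast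
  rfl

lemma eca_iter_perCfg (N : ℕ) (W : ZMod 6 → Bool) (n : ℕ) :
    (eca N)^[n] (perCfg W) = perCfg ((stepP N)^[n] W) := by
  induction n with
  | zero => rfl
  | succ n ih => rw [Function.iterate_succ_apply', ih, eca_perCfg,
      ← Function.iterate_succ_apply' (stepP N) n W]

lemma cyc (N : ℕ) (W : ZMod 6 → Bool) (hW : stepP N (stepP N W) = W) (n : ℕ) :
    (stepP N)^[n] W = W ∨ (stepP N)^[n] W = stepP N W := by
  induction n with
  | zero => exact Or.inl rfl
  | succ n ih =>
    rcases ih with h | h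
    · rw [Function.iterate_succ_apply', h]; exact Or.inr rfl
    · rw [Function.iterate_succ_apply', h, hW]; exact Or.inl rfl

lemma cast_add_nat_mul_six (a : ℤ) (t : ℤ) : ((a + 6 * t : ℤ) : ZMod 6) = (a : ZMod 6) := by
  push_cast
  rw [show (6 : ZMod 6) = 0 from by decide, zero_mul, add_zero]

/-- Mechanism A, right-blocking version: a temporally 2-periodic, spatially 6-periodic
configuration with a persistent right-blocking pair. -/
lemma notPosExp_A_right (N : ℕ) (W : ZMod 6 → Bool) (γ : ZMod 6)
    (hW : stepP N (stepP N W) = W)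
    (hb1 : ∀ t : Bool, localRule N (W (γ-2)) (W (γ-1)) t = localRule N (W (γ-2)) (W (γ-1)) false)
    (hb2 : ∀ t : Bool, localRule N (stepP N W (γ-2)) (stepP N W (γ-1)) t
      = localRule N (stepP N W (γ-2)) (stepP N W (γ-1)) false) :
    ¬ PosExpansiveCA (eca N) := by
  rintro ⟨ε, hε, hx⟩
  obtain ⟨M, hM⟩ : ∃ M : ℕ, (1/2:ℝ) ^ M < ε / 2 :=
    exists_pow_lt_of_lt_one (by positivity) (by norm_num)
  set m : ℤ := (γ.val : ℤ) + 6 * M with hm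
  have hmM : (M : ℤ) ≤ m := by
    have : (0:ℤ) ≤ (γ.val : ℤ) := by positivity
    omega
  have hcast : (m : ZMod 6) = γ := by
    rw [hm, cast_add_nat_mul_six]
    simp [ZMod.natCast_val]
  set z := perCfg W with hz
  set y := Function.update z m (!(z m)) with hy
  have hblock : ∀ n : ℕ, ∀ t : Bool,
      localRule N ((eca N)^[n] z (m-2)) ((eca N)^[n] z (m-1)) t
      = localRule N ((eca N)^[n] z (m-2)) ((eca N)^[n] z (m-1)) false := by
    intro n t
    rw [hz, eca_iter_perCfg]
    have h2 : ((m - 2 : ℤ) : ZMod 6) = γ - 2 := by push_cast [hcast]; ring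
    have h1 : ((m - 1 : ℤ) : ZMod 6) = γ - 1 := by push_cast [hcast]; ring
    show localRule N ((stepP N)^[n] W ((m-2 : ℤ) : ZMod 6)) ((stepP N)^[n] W ((m-1:ℤ) : ZMod 6)) t
      = localRule N ((stepP N)^[n] W ((m-2 : ℤ) : ZMod 6)) ((stepP N)^[n] W ((m-1:ℤ) : ZMod 6)) false
    rw [h2, h1]
    rcases cyc N W hW n with h | h <;> rw [h]
    · exact hb1 t
    · exact hb2 t
  have key : ∀ n : ℕ, ∀ i : ℤ, i < m → (eca N)^[n] y i = (eca N)^[n] z i := by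
    intro n
    induction n with
    | zero =>
      intro i hi
      rw [hy]
      exact Function.update_of_ne (by omega) _ _
    | succ n ih =>
      intro i hi
      rw [Function.iterate_succ_apply', Function.iterate_succ_apply']
      show localRule N ((eca N)^[n] y (i-1)) ((eca N)^[n] y i) ((eca N)^[n] y (i+1))
        = localRule N ((eca N)^[n] z (i-1)) ((eca N)^[n] z i) ((eca N)^[n] z (i+1))
      rw [ih (i-1) (by omega), ih i (by omega)]
      by_cases hi1 : i + 1 < m
      · rw [ih (i+1) hi1]
      · have : i = m - 1 := by omega
        subst this
        have em2 : m - 1 - 1 = m - 2 := by ring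
        rw [em2]
        rw [hblock n ((eca N)^[n] y (m-1+1)), hblock n ((eca N)^[n] z (m-1+1))]
  have hzy : y ≠ z := by
    intro hcon
    have := congrFun hcon m
    rw [hy, Function.update_self] at this
    exact (Bool.not_ne_self (z m)) this
  obtain ⟨n, hn⟩ := hx y z hzy
  have hub : dC ((eca N)^[n] y) ((eca N)^[n] z) ≤ 2 * (1/2:ℝ)^M := by
    apply dC_le_right
    intro i hi
    exact key n i (by omega)
  nlinarith

/-- Mechanism A, left-blocking version. -/
lemma notPosExp_A_left (N : ℕ) (W : ZMod 6 → Bool) (γ : ZMod 6)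
    (hW : stepP N (stepP N W) = W)
    (hb1 : ∀ t : Bool, localRule N t (W (γ+1)) (W (γ+2)) = localRule N false (W (γ+1)) (W (γ+2)))
    (hb2 : ∀ t : Bool, localRule N t (stepP N W (γ+1)) (stepP N W (γ+2))
      = localRule N false (stepP N W (γ+1)) (stepP N W (γ+2))) :
    ¬ PosExpansiveCA (eca N) := by
  rintro ⟨ε, hε, hx⟩
  obtain ⟨M, hM⟩ : ∃ M : ℕ, (1/2:ℝ) ^ M < ε / 2 :=
    exists_pow_lt_of_lt_one (by positivity) (by norm_num)
  set m : ℤ := (γ.val : ℤ) - 6 * M - 6 with hm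
  have hmM : m < -(M : ℤ) := by
    have : (γ.val : ℤ) < 6 := by
      have := γ.val_lt
      omega
    omega
  have hcast : (m : ZMod 6) = γ := by
    have : m = (γ.val : ℤ) + 6 * (-(M:ℤ) - 1) := by rw [hm]; ring
    rw [this, cast_add_nat_mul_six]
    simp [ZMod.natCast_val]
  set z := perCfg W with hz
  set y := Function.update z m (!(z m)) with hy
  have hblock : ∀ n : ℕ, ∀ t : Bool,
      localRule N t ((eca N)^[n] z (m+1)) ((eca N)^[n] z (m+2))
      = localRule N false ((eca N)^[n] z (m+1)) ((eca N)^[n] z (m+2)) := by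
    intro n t
    rw [hz, eca_iter_perCfg]
    have h1 : ((m + 1 : ℤ) : ZMod 6) = γ + 1 := by push_cast [hcast]; ring
    have h2 : ((m + 2 : ℤ) : ZMod 6) = γ + 2 := by push_cast [hcast]; ring
    show localRule N t ((stepP N)^[n] W ((m+1 : ℤ) : ZMod 6)) ((stepP N)^[n] W ((m+2:ℤ) : ZMod 6))
      = localRule N false ((stepP N)^[n] W ((m+1 : ℤ) : ZMod 6)) ((stepP N)^[n] W ((m+2:ℤ) : ZMod 6))
    rw [h1, h2]
    rcases cyc N W hW n with h | h <;> rw [h]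
    · exact hb1 t
    · exact hb2 t
  have key : ∀ n : ℕ, ∀ i : ℤ, m < i → (eca N)^[n] y i = (eca N)^[n] z i := by
    intro n
    induction n with
    | zero =>
      intro i hi
      rw [hy]
      exact Function.update_of_ne (by omega) _ _
    | succ n ih =>
      intro i hi
      rw [Function.iterate_succ_apply', Function.iterate_succ_apply']
      show localRule N ((eca N)^[n] y (i-1)) ((eca N)^[n] y i) ((eca N)^[n] y (i+1))
        = localRule N ((eca N)^[n] z (i-1)) ((eca N)^[n] z i) ((eca N)^[n] z (i+1))
      rw [ih i (by omega), ih (i+1) (by omega)]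
      by_cases hi1 : m < i - 1
      · rw [ih (i-1) hi1]
      · have : i = m + 1 := by omega
        subst this
        have em2 : m + 1 + 1 = m + 2 := by ring
        rw [em2]
        rw [hblock n ((eca N)^[n] y (m+1-1)), hblock n ((eca N)^[n] z (m+1-1))]
  have hzy : y ≠ z := by
    intro hcon
    have := congrFun hcon m
    rw [hy, Function.update_self] at this
    exact (Bool.not_ne_self (z m)) this
  obtain ⟨n, hn⟩ := hx y z hzy
  have hub : dC ((eca N)^[n] y) ((eca N)^[n] z) ≤ 2 * (1/2:ℝ)^M := by
    apply dC_le_left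
    intro i hi
    exact key n i (by omega)
  nlinarith

def mkW (w : List Bool) : ZMod 6 → Bool := fun r => w.getD r.val false
inductive Cert where
  | A (w : List Bool) (c : ℕ) (right : Bool)
  | B (L1 L2 : List Bool)
def Cert.check (N : ℕ) : Cert → Bool
  | .A w c right =>
    let W := mkW w
    let γ : ZMod 6 := (c : ZMod 6)
    decide (stepP N (stepP N W) = W) &&
    (if right then
      decide (∀ t, localRule N (W (γ-2)) (W (γ-1)) t = localRule N (W (γ-2)) (W (γ-1)) false)
      && decide (∀ t, localRule N (stepP N W (γ-2)) (stepP N W (γ-1)) t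
          = localRule N (stepP N W (γ-2)) (stepP N W (γ-1)) false)
    else
      decide (∀ t, localRule N t (W (γ+1)) (W (γ+2)) = localRule N false (W (γ+1)) (W (γ+2)))
      && decide (∀ t, localRule N t (stepP N W (γ+1)) (stepP N W (γ+2))
          = localRule N false (stepP N W (γ+1)) (stepP N W (γ+2))))
  | .B L1 L2 =>
    decide (L1.length ≤ 7) && decide (L2.length ≤ 7)
    && decide (∀ k : Fin 7, (k:ℕ) ≠ 2 → (k:ℕ) ≠ 3 → (k:ℕ) ≠ 4 →
        L1.getD (k:ℕ) false = L2.getD (k:ℕ) false)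
    && decide (∃ k : Fin 7, L1.getD (k:ℕ) false ≠ L2.getD (k:ℕ) false)
    && decide (∀ k : Fin 5, localRule N (L1.getD (k:ℕ) false) (L1.getD ((k:ℕ)+1) false)
        (L1.getD ((k:ℕ)+2) false) = localRule N (L2.getD (k:ℕ) false)
        (L2.getD ((k:ℕ)+1) false) (L2.getD ((k:ℕ)+2) false))

def bipermB (N : ℕ) : Bool :=
  decide (∀ b c : Bool, localRule N true b c ≠ localRule N false b c) &&
  decide (∀ a b : Bool, localRule N a b true ≠ localRule N a b false)
def certTable : List Cert := [
  Cert.A [false, false, false, false, false, false] 0 true,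
  Cert.B [false, false, false, true, false, false, true] [false, false, false, true, true, false, true],
  Cert.A [false, false, false, false, false, false] 0 false,
  Cert.A [false, false, false, false, false, false] 0 true,
  Cert.A [false, false, false, false, false, false] 0 true,
  Cert.A [false, false, false, false, false, true] 1 true,
  Cert.A [false, false, false, false, false, false] 0 false,
  Cert.A [false, false, false, false, false, false] 0 true,
  Cert.A [false, false, false, false, false, false] 0 true,
  Cert.B [false, false, true, true, false, false, true] [false, false, true, true, true, false, true],
  Cert.A [false, false, false, false, false, false] 0 false,
  Cert.A [false, false, false, false, false, false] 0 true,
  Cert.A [false, false, false, false, false, false] 0 true,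
  Cert.A [false, false, true, false, false, true] 0 true,
  Cert.A [false, false, false, false, false, false] 0 false,
  Cert.A [false, false, false, false, false, false] 0 true,
  Cert.A [false, false, false, false, false, false] 0 true,
  Cert.A [false, false, false, false, false, false] 0 false,
  Cert.B [false, false, false, true, false, true, false] [false, false, false, true, true, true, false],
  Cert.A [false, false, false, false, false, false] 0 true,
  Cert.A [false, false, false, false, false, false] 0 true,
  Cert.A [false, false, false, false, false, false] 0 false,
  Cert.B [false, false, true, true, false, true, true] [false, false, true, true, true, true, true],
  Cert.A [false, false, false, false, false, false] 0 true,
  Cert.A [false, false, false, false, false, false] 0 true,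
  Cert.B [false, false, true, true, false, true, false] [false, false, true, true, true, true, false],
  Cert.B [false, false, true, true, false, true, false] [false, false, true, true, true, true, false],
  Cert.A [false, false, false, false, false, false] 0 true,
  Cert.A [false, false, false, false, false, false] 0 true,
  Cert.A [false, false, false, false, false, true] 0 true,
  Cert.A [false, true, false, true, false, true] 0 true,
  Cert.A [false, false, false, false, false, false] 0 true,
  Cert.A [false, false, false, false, false, false] 0 true,
  Cert.B [false, false, true, false, false, true, false] [false, false, true, true, true, true, false],
  Cert.A [false, false, false, false, false, false] 0 false,
  Cert.A [false, false, false, false, false, false] 0 true,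
  Cert.A [false, false, false, false, false, false] 0 true,
  Cert.B [false, true, true, false, false, true, true] [false, true, true, true, true, true, true],
  Cert.A [false, false, false, false, false, false] 0 false,
  Cert.A [false, false, false, false, false, false] 0 true,
  Cert.A [false, false, false, false, false, false] 0 true,
  Cert.B [false, true, true, false, false, true, false] [false, true, true, true, true, true, false],
  Cert.A [false, false, false, false, false, false] 0 false,
  Cert.A [false, false, false, false, false, false] 0 true,
  Cert.A [false, false, false, false, false, false] 0 true,
  Cert.A [false, false, true, false, false, true] 0 true,
  Cert.A [false, false, false, false, false, false] 0 false,
  Cert.A [false, false, false, false, false, false] 0 true,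
  Cert.A [false, false, false, false, false, false] 0 true,
  Cert.A [false, false, false, false, false, false] 0 false,
  Cert.A [false, false, true, false, false, true] 0 true,
  Cert.A [false, false, false, false, false, false] 0 true,
  Cert.A [false, false, false, false, false, false] 0 true,
  Cert.A [false, false, false, false, false, false] 0 false,
  Cert.B [false, true, false, false, false, false, true] [false, true, false, true, true, false, true],
  Cert.A [false, false, false, false, false, false] 0 true,
  Cert.A [false, false, false, false, false, false] 0 true,
  Cert.B [false, true, false, false, false, true, false] [false, true, false, true, true, true, false],
  Cert.A [false, true, false, true, false, true] 0 false,
  Cert.A [false, false, false, false, false, false] 0 true,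
  Cert.A [false, false, false, false, false, false] 0 true,
  Cert.B [false, false, true, false, false, false, false] [false, false, true, false, true, false, false],
  Cert.B [false, true, false, false, true, false, true] [false, true, false, true, false, false, true],
  Cert.A [false, false, false, false, false, false] 0 true,
  Cert.A [false, false, false, false, false, false] 0 true,
  Cert.B [false, false, false, true, false, true, true] [false, false, false, true, true, true, true],
  Cert.A [false, false, false, false, false, false] 0 false,
  Cert.B [false, false, false, true, false, true, true] [false, false, false, true, true, true, true],
  Cert.A [false, false, false, false, false, false] 0 true,
  Cert.A [false, false, true, false, false, true] 0 false,
  Cert.A [false, false, false, false, false, false] 0 false,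
  Cert.A [false, false, false, false, false, true] 1 true,
  Cert.A [false, false, false, false, false, false] 0 true,
  Cert.A [false, true, true, false, true, true] 1 true,
  Cert.A [false, false, false, false, false, false] 0 false,
  Cert.A [false, true, true, false, true, true] 1 true,
  Cert.A [false, false, false, false, false, false] 0 true,
  Cert.A [false, false, true, false, false, true] 0 true,
  Cert.A [false, false, false, false, false, false] 0 false,
  Cert.A [false, true, false, true, false, true] 0 true,
  Cert.A [false, false, false, false, false, false] 0 true,
  Cert.A [false, false, false, false, false, false] 0 false,
  Cert.B [false, false, false, true, false, true, true] [false, false, false, true, true, true, true],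
  Cert.A [false, false, false, false, false, false] 0 false,
  Cert.A [false, false, false, false, false, false] 0 true,
  Cert.A [false, false, false, false, false, false] 0 false,
  Cert.A [false, true, false, true, false, true] 0 false,
  Cert.A [false, false, false, false, false, false] 0 false,
  Cert.A [false, false, false, false, false, false] 0 true,
  Cert.A [false, true, true, false, true, true] 2 false,
  Cert.B [] [],
  Cert.B [false, false, false, false, false, false, false] [false, false, false, true, true, false, false],
  Cert.A [false, false, false, false, false, false] 0 true,
  Cert.A [false, true, false, true, false, true] 0 true,
  Cert.A [false, true, false, true, false, true] 0 true,
  Cert.A [false, false, false, true, false, true] 0 true,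
  Cert.A [false, false, false, false, false, false] 0 true,
  Cert.B [false, false, true, false, false, true, true] [false, false, true, true, true, true, true],
  Cert.A [false, false, false, false, false, false] 0 false,
  Cert.B [false, false, true, false, false, false, true] [false, false, true, true, true, false, true],
  Cert.A [false, false, false, false, false, false] 0 true,
  Cert.A [false, false, true, false, false, true] 1 false,
  Cert.A [false, false, false, false, false, false] 0 false,
  Cert.B [false, false, false, false, false, false, true] [false, false, false, false, true, false, true],
  Cert.A [false, false, false, false, false, false] 0 true,
  Cert.B [] [],
  Cert.A [false, false, false, false, false, false] 0 false,
  Cert.B [false, false, false, false, false, false, true] [false, false, false, true, true, false, true],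
  Cert.A [false, false, false, false, false, false] 0 true,
  Cert.A [false, false, true, false, false, true] 0 true,
  Cert.A [false, false, false, false, false, false] 0 false,
  Cert.B [false, false, false, false, false, false, true] [false, false, false, false, true, false, true],
  Cert.A [false, false, false, false, false, false] 0 true,
  Cert.A [false, false, false, false, false, false] 0 false,
  Cert.A [false, true, false, true, false, true] 0 true,
  Cert.A [false, false, false, false, false, false] 0 false,
  Cert.A [false, false, false, false, false, false] 0 true,
  Cert.A [false, false, false, false, false, false] 0 false,
  Cert.B [false, true, false, false, true, false, true] [false, true, false, true, false, false, true],
  Cert.A [false, false, false, false, false, false] 0 false,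
  Cert.A [false, false, false, false, false, false] 0 true,
  Cert.B [false, true, false, false, false, false, false] [false, true, false, true, true, false, false],
  Cert.B [false, false, true, false, false, false, true] [false, false, true, false, true, false, true],
  Cert.B [false, false, false, false, false, false, false] [false, false, false, true, true, false, false],
  Cert.A [false, false, false, false, false, false] 0 true,
  Cert.B [false, false, false, true, false, false, false] [false, false, false, true, true, false, false],
  Cert.B [false, false, false, true, false, false, true] [false, false, false, true, true, false, true],
  Cert.B [false, false, false, false, false, false, false] [false, false, false, false, true, false, false],
  Cert.A [false, false, false, false, false, false] 0 true,
  Cert.B [false, false, false, true, false, false, true] [false, false, false, true, true, false, true],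
  Cert.A [false, false, false, false, false, false] 0 false,
  Cert.B [false, false, true, false, true, true, false] [false, false, true, true, false, true, false],
  Cert.A [false, false, false, false, false, false] 0 true,
  Cert.A [false, false, true, false, false, true] 0 false,
  Cert.A [false, false, false, false, false, false] 0 false,
  Cert.A [false, true, false, true, false, true] 1 true,
  Cert.A [false, false, false, false, false, false] 0 true,
  Cert.A [true, true, true, true, true, true] 0 false,
  Cert.A [false, false, false, false, false, false] 0 false,
  Cert.A [true, true, true, true, true, true] 0 false,
  Cert.A [false, false, false, false, false, false] 0 true,
  Cert.A [false, false, true, false, false, true] 0 true,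
  Cert.A [false, false, false, false, false, false] 0 false,
  Cert.A [false, true, false, true, false, true] 0 true,
  Cert.A [false, false, false, false, false, false] 0 true,
  Cert.B [false, false, true, false, true, true, false] [false, false, true, true, false, true, false],
  Cert.B [false, false, true, false, false, true, false] [false, false, true, true, true, true, false],
  Cert.B [false, false, true, false, false, true, false] [false, false, true, true, true, true, false],
  Cert.A [false, false, false, false, false, false] 0 true,
  Cert.A [false, true, false, true, false, true] 1 false,
  Cert.B [] [],
  Cert.B [false, false, false, false, false, false, false] [false, false, false, false, true, false, false],
  Cert.A [false, false, false, false, false, false] 0 true,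
  Cert.A [true, true, true, true, true, true] 0 false,
  Cert.A [true, true, true, true, true, true] 0 false,
  Cert.A [true, true, true, true, true, true] 0 false,
  Cert.A [false, false, false, false, false, false] 0 true,
  Cert.A [false, false, true, false, false, true] 0 true,
  Cert.A [false, true, false, true, false, true] 0 true,
  Cert.A [false, true, false, true, false, true] 0 true,
  Cert.A [false, false, false, false, false, false] 0 true,
  Cert.B [false, false, false, true, false, true, false] [false, false, false, true, true, true, false],
  Cert.A [false, false, false, false, false, false] 0 false,
  Cert.A [false, true, false, true, false, true] 0 false,
  Cert.A [false, false, false, false, false, false] 0 true,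
  Cert.B [] [],
  Cert.A [false, false, false, false, false, false] 0 false,
  Cert.B [false, false, false, false, false, false, true] [false, false, false, false, true, false, true],
  Cert.A [false, false, false, false, false, false] 0 true,
  Cert.A [true, true, true, true, true, true] 0 false,
  Cert.A [false, false, false, false, false, false] 0 false,
  Cert.A [false, true, false, true, false, true] 0 false,
  Cert.A [false, false, false, false, false, false] 0 true,
  Cert.A [false, false, true, false, false, true] 0 true,
  Cert.A [false, false, false, false, false, false] 0 false,
  Cert.A [true, true, true, true, true, true] 0 false,
  Cert.A [false, false, false, false, false, false] 0 true,
  Cert.A [false, true, false, true, false, true] 0 true,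
  Cert.A [false, false, true, false, false, true] 0 true,
  Cert.A [false, false, true, false, false, true] 0 true,
  Cert.A [false, false, false, false, false, false] 0 true,
  Cert.B [false, false, true, false, false, false, false] [false, false, true, false, true, false, false],
  Cert.B [false, true, false, false, false, false, true] [false, true, false, true, true, false, true],
  Cert.B [false, false, false, false, false, false, false] [false, false, false, false, true, false, false],
  Cert.A [false, false, false, false, false, false] 0 true,
  Cert.A [true, true, true, true, true, true] 0 false,
  Cert.A [false, true, false, true, false, true] 0 false,
  Cert.A [false, true, false, true, false, true] 0 false,
  Cert.A [false, false, false, false, false, false] 0 true,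
  Cert.A [true, true, true, true, true, true] 0 false,
  Cert.A [true, true, true, true, true, true] 0 false,
  Cert.A [true, true, true, true, true, true] 0 false,
  Cert.A [false, false, false, false, false, false] 0 true,
  Cert.A [true, true, true, true, true, true] 0 true,
  Cert.A [false, false, false, false, false, false] 0 false,
  Cert.A [true, true, true, true, true, true] 0 true,
  Cert.A [false, false, false, false, false, false] 0 true,
  Cert.A [false, false, true, false, false, true] 0 false,
  Cert.A [false, false, false, false, false, false] 0 false,
  Cert.A [false, false, true, false, false, true] 1 true,
  Cert.A [false, false, false, false, false, false] 0 true,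
  Cert.A [false, false, false, true, true, true] 0 true,
  Cert.A [false, false, false, false, false, false] 0 false,
  Cert.A [false, true, true, false, true, true] 0 true,
  Cert.A [false, false, false, false, false, false] 0 true,
  Cert.A [false, false, true, false, false, true] 0 true,
  Cert.A [false, false, false, false, false, false] 0 false,
  Cert.A [false, true, false, true, false, true] 0 true,
  Cert.A [false, false, false, false, false, false] 0 true,
  Cert.A [true, true, true, true, true, true] 0 true,
  Cert.A [true, true, true, true, true, true] 0 true,
  Cert.A [true, true, true, true, true, true] 0 true,
  Cert.A [false, false, false, false, false, false] 0 true,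
  Cert.A [false, true, false, true, false, true] 0 false,
  Cert.A [false, true, false, true, false, true] 0 false,
  Cert.A [false, true, false, true, false, true] 0 false,
  Cert.A [false, false, false, false, false, false] 0 true,
  Cert.A [false, true, true, false, true, true] 0 true,
  Cert.A [false, true, true, false, true, true] 0 true,
  Cert.A [false, true, true, false, true, true] 0 true,
  Cert.A [false, false, false, false, false, false] 0 true,
  Cert.A [false, true, false, true, false, true] 0 true,
  Cert.A [false, true, false, true, false, true] 0 true,
  Cert.A [false, true, false, true, false, true] 0 true,
  Cert.A [false, false, false, false, false, false] 0 true,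
  Cert.A [true, true, true, true, true, true] 0 true,
  Cert.A [false, false, false, false, false, false] 0 false,
  Cert.A [true, true, true, true, true, true] 0 true,
  Cert.A [false, false, false, false, false, false] 0 true,
  Cert.A [false, false, true, false, false, true] 1 false,
  Cert.A [false, false, false, false, false, false] 0 false,
  Cert.A [true, true, true, true, true, true] 0 true,
  Cert.A [false, false, false, false, false, false] 0 true,
  Cert.A [false, false, true, true, true, true] 0 true,
  Cert.A [false, false, false, false, false, false] 0 false,
  Cert.A [true, true, true, true, true, true] 0 true,
  Cert.A [false, false, false, false, false, false] 0 true,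
  Cert.A [false, false, true, false, false, true] 0 true,
  Cert.A [false, false, false, false, false, false] 0 false,
  Cert.A [true, true, true, true, true, true] 0 true,
  Cert.A [false, false, false, false, false, false] 0 true,
  Cert.A [false, true, false, true, false, true] 0 true,
  Cert.A [false, true, false, true, false, true] 0 true,
  Cert.A [false, true, false, true, false, true] 0 true,
  Cert.A [false, false, false, false, false, false] 0 true,
  Cert.A [true, true, true, true, true, true] 0 true,
  Cert.A [true, true, true, true, true, true] 0 true,
  Cert.A [true, true, true, true, true, true] 0 true,
  Cert.A [false, false, false, false, false, false] 0 true,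
  Cert.A [true, true, true, true, true, true] 0 true,
  Cert.A [true, true, true, true, true, true] 0 true,
  Cert.A [true, true, true, true, true, true] 0 true,
  Cert.A [false, false, false, false, false, false] 0 true,
  Cert.A [true, true, true, true, true, true] 0 true,
  Cert.A [true, true, true, true, true, true] 0 true,
  Cert.A [true, true, true, true, true, true] 0 true]

private theorem certOK_0 : (bipermB 0 || Cert.check 0 (Cert.A [false, false, false, false, false, false] 0 true)) = true := by decide
private theorem certOK_1 : (bipermB 1 || Cert.check 1 (Cert.B [false, false, false, true, false, false, true] [false, false, false, true, true, false, true])) = true := by decide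
private theorem certOK_2 : (bipermB 2 || Cert.check 2 (Cert.A [false, false, false, false, false, false] 0 false)) = true := by decide
private theorem certOK_3 : (bipermB 3 || Cert.check 3 (Cert.A [false, false, false, false, false, false] 0 true)) = true := by decide
private theorem certOK_4 : (bipermB 4 || Cert.check 4 (Cert.A [false, false, false, false, false, false] 0 true)) = true := by decide
private theorem certOK_5 : (bipermB 5 || Cert.check 5 (Cert.A [false, false, false, false, false, true] 1 true)) = true := by decide
private theorem certOK_6 : (bipermB 6 || Cert.check 6 (Cert.A [false, false, false, false, false, false] 0 false)) = true := by decide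
private theorem certOK_7 : (bipermB 7 || Cert.check 7 (Cert.A [false, false, false, false, false, false] 0 true)) = true := by decide
private theorem certOK_8 : (bipermB 8 || Cert.check 8 (Cert.A [false, false, false, false, false, false] 0 true)) = true := by decide
private theorem certOK_9 : (bipermB 9 || Cert.check 9 (Cert.B [false, false, true, true, false, false, true] [false, false, true, true, true, false, true])) = true := by decide
private theorem certOK_10 : (bipermB 10 || Cert.check 10 (Cert.A [false, false, false, false, false, false] 0 false)) = true := by decide
private theorem certOK_11 : (bipermB 11 || Cert.check 11 (Cert.A [false, false, false, false, false, false] 0 true)) = true := by decide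
private theorem certOK_12 : (bipermB 12 || Cert.check 12 (Cert.A [false, false, false, false, false, false] 0 true)) = true := by decide
private theorem certOK_13 : (bipermB 13 || Cert.check 13 (Cert.A [false, false, true, false, false, true] 0 true)) = true := by decide
private theorem certOK_14 : (bipermB 14 || Cert.check 14 (Cert.A [false, false, false, false, false, false] 0 false)) = true := by decide
private theorem certOK_15 : (bipermB 15 || Cert.check 15 (Cert.A [false, false, false, false, false, false] 0 true)) = true := by decide
private theorem certOK_16 : (bipermB 16 || Cert.check 16 (Cert.A [false, false, false, false, false, false] 0 true)) = true := by decide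
private theorem certOK_17 : (bipermB 17 || Cert.check 17 (Cert.A [false, false, false, false, false, false] 0 false)) = true := by decide
private theorem certOK_18 : (bipermB 18 || Cert.check 18 (Cert.B [false, false, false, true, false, true, false] [false, false, false, true, true, true, false])) = true := by decide
private theorem certOK_19 : (bipermB 19 || Cert.check 19 (Cert.A [false, false, false, false, false, false] 0 true)) = true := by decide
private theorem certOK_20 : (bipermB 20 || Cert.check 20 (Cert.A [false, false, false, false, false, false] 0 true)) = true := by decide
private theorem certOK_21 : (bipermB 21 || Cert.check 21 (Cert.A [false, false, false, false, false, false] 0 false)) = true := by decide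
private theorem certOK_22 : (bipermB 22 || Cert.check 22 (Cert.B [false, false, true, true, false, true, true] [false, false, true, true, true, true, true])) = true := by decide
private theorem certOK_23 : (bipermB 23 || Cert.check 23 (Cert.A [false, false, false, false, false, false] 0 true)) = true := by decide
private theorem certOK_24 : (bipermB 24 || Cert.check 24 (Cert.A [false, false, false, false, false, false] 0 true)) = true := by decide
private theorem certOK_25 : (bipermB 25 || Cert.check 25 (Cert.B [false, false, true, true, false, true, false] [false, false, true, true, true, true, false])) = true := by decide
private theorem certOK_26 : (bipermB 26 || Cert.check 26 (Cert.B [false, false, true, true, false, true, false] [false, false, true, true, true, true, false])) = true := by decide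
private theorem certOK_27 : (bipermB 27 || Cert.check 27 (Cert.A [false, false, false, false, false, false] 0 true)) = true := by decide
private theorem certOK_28 : (bipermB 28 || Cert.check 28 (Cert.A [false, false, false, false, false, false] 0 true)) = true := by decide
private theorem certOK_29 : (bipermB 29 || Cert.check 29 (Cert.A [false, false, false, false, false, true] 0 true)) = true := by decide
private theorem certOK_30 : (bipermB 30 || Cert.check 30 (Cert.A [false, true, false, true, false, true] 0 true)) = true := by decide
private theorem certOK_31 : (bipermB 31 || Cert.check 31 (Cert.A [false, false, false, false, false, false] 0 true)) = true := by decide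
private theorem certOK_32 : (bipermB 32 || Cert.check 32 (Cert.A [false, false, false, false, false, false] 0 true)) = true := by decide
private theorem certOK_33 : (bipermB 33 || Cert.check 33 (Cert.B [false, false, true, false, false, true, false] [false, false, true, true, true, true, false])) = true := by decide
private theorem certOK_34 : (bipermB 34 || Cert.check 34 (Cert.A [false, false, false, false, false, false] 0 false)) = true := by decide
private theorem certOK_35 : (bipermB 35 || Cert.check 35 (Cert.A [false, false, false, false, false, false] 0 true)) = true := by decide
private theorem certOK_36 : (bipermB 36 || Cert.check 36 (Cert.A [false, false, false, false, false, false] 0 true)) = true := by decide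
private theorem certOK_37 : (bipermB 37 || Cert.check 37 (Cert.B [false, true, true, false, false, true, true] [false, true, true, true, true, true, true])) = true := by decide
private theorem certOK_38 : (bipermB 38 || Cert.check 38 (Cert.A [false, false, false, false, false, false] 0 false)) = true := by decide
private theorem certOK_39 : (bipermB 39 || Cert.check 39 (Cert.A [false, false, false, false, false, false] 0 true)) = true := by decide
private theorem certOK_40 : (bipermB 40 || Cert.check 40 (Cert.A [false, false, false, false, false, false] 0 true)) = true := by decide
private theorem certOK_41 : (bipermB 41 || Cert.check 41 (Cert.B [false, true, true, false, false, true, false] [false, true, true, true, true, true, false])) = true := by decide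
private theorem certOK_42 : (bipermB 42 || Cert.check 42 (Cert.A [false, false, false, false, false, false] 0 false)) = true := by decide
private theorem certOK_43 : (bipermB 43 || Cert.check 43 (Cert.A [false, false, false, false, false, false] 0 true)) = true := by decide
private theorem certOK_44 : (bipermB 44 || Cert.check 44 (Cert.A [false, false, false, false, false, false] 0 true)) = true := by decide
private theorem certOK_45 : (bipermB 45 || Cert.check 45 (Cert.A [false, false, true, false, false, true] 0 true)) = true := by decide
private theorem certOK_46 : (bipermB 46 || Cert.check 46 (Cert.A [false, false, false, false, false, false] 0 false)) = true := by decide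
private theorem certOK_47 : (bipermB 47 || Cert.check 47 (Cert.A [false, false, false, false, false, false] 0 true)) = true := by decide
private theorem certOK_48 : (bipermB 48 || Cert.check 48 (Cert.A [false, false, false, false, false, false] 0 true)) = true := by decide
private theorem certOK_49 : (bipermB 49 || Cert.check 49 (Cert.A [false, false, false, false, false, false] 0 false)) = true := by decide
private theorem certOK_50 : (bipermB 50 || Cert.check 50 (Cert.A [false, false, true, false, false, true] 0 true)) = true := by decide
private theorem certOK_51 : (bipermB 51 || Cert.check 51 (Cert.A [false, false, false, false, false, false] 0 true)) = true := by decide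
private theorem certOK_52 : (bipermB 52 || Cert.check 52 (Cert.A [false, false, false, false, false, false] 0 true)) = true := by decide
private theorem certOK_53 : (bipermB 53 || Cert.check 53 (Cert.A [false, false, false, false, false, false] 0 false)) = true := by decide
private theorem certOK_54 : (bipermB 54 || Cert.check 54 (Cert.B [false, true, false, false, false, false, true] [false, true, false, true, true, false, true])) = true := by decide
private theorem certOK_55 : (bipermB 55 || Cert.check 55 (Cert.A [false, false, false, false, false, false] 0 true)) = true := by decide
private theorem certOK_56 : (bipermB 56 || Cert.check 56 (Cert.A [false, false, false, false, false, false] 0 true)) = true := by decide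
private theorem certOK_57 : (bipermB 57 || Cert.check 57 (Cert.B [false, true, false, false, false, true, false] [false, true, false, true, true, true, false])) = true := by decide
private theorem certOK_58 : (bipermB 58 || Cert.check 58 (Cert.A [false, true, false, true, false, true] 0 false)) = true := by decide
private theorem certOK_59 : (bipermB 59 || Cert.check 59 (Cert.A [false, false, false, false, false, false] 0 true)) = true := by decide
private theorem certOK_60 : (bipermB 60 || Cert.check 60 (Cert.A [false, false, false, false, false, false] 0 true)) = true := by decide
private theorem certOK_61 : (bipermB 61 || Cert.check 61 (Cert.B [false, false, true, false, false, false, false] [false, false, true, false, true, false, false])) = true := by decide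
private theorem certOK_62 : (bipermB 62 || Cert.check 62 (Cert.B [false, true, false, false, true, false, true] [false, true, false, true, false, false, true])) = true := by decide
private theorem certOK_63 : (bipermB 63 || Cert.check 63 (Cert.A [false, false, false, false, false, false] 0 true)) = true := by decide
private theorem certOK_64 : (bipermB 64 || Cert.check 64 (Cert.A [false, false, false, false, false, false] 0 true)) = true := by decide
private theorem certOK_65 : (bipermB 65 || Cert.check 65 (Cert.B [false, false, false, true, false, true, true] [false, false, false, true, true, true, true])) = true := by decide
private theorem certOK_66 : (bipermB 66 || Cert.check 66 (Cert.A [false, false, false, false, false, false] 0 false)) = true := by decide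
private theorem certOK_67 : (bipermB 67 || Cert.check 67 (Cert.B [false, false, false, true, false, true, true] [false, false, false, true, true, true, true])) = true := by decide
private theorem certOK_68 : (bipermB 68 || Cert.check 68 (Cert.A [false, false, false, false, false, false] 0 true)) = true := by decide
private theorem certOK_69 : (bipermB 69 || Cert.check 69 (Cert.A [false, false, true, false, false, true] 0 false)) = true := by decide
private theorem certOK_70 : (bipermB 70 || Cert.check 70 (Cert.A [false, false, false, false, false, false] 0 false)) = true := by decide
private theorem certOK_71 : (bipermB 71 || Cert.check 71 (Cert.A [false, false, false, false, false, true] 1 true)) = true := by decide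
private theorem certOK_72 : (bipermB 72 || Cert.check 72 (Cert.A [false, false, false, false, false, false] 0 true)) = true := by decide
private theorem certOK_73 : (bipermB 73 || Cert.check 73 (Cert.A [false, true, true, false, true, true] 1 true)) = true := by decide
private theorem certOK_74 : (bipermB 74 || Cert.check 74 (Cert.A [false, false, false, false, false, false] 0 false)) = true := by decide
private theorem certOK_75 : (bipermB 75 || Cert.check 75 (Cert.A [false, true, true, false, true, true] 1 true)) = true := by decide
private theorem certOK_76 : (bipermB 76 || Cert.check 76 (Cert.A [false, false, false, false, false, false] 0 true)) = true := by decide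
private theorem certOK_77 : (bipermB 77 || Cert.check 77 (Cert.A [false, false, true, false, false, true] 0 true)) = true := by decide
private theorem certOK_78 : (bipermB 78 || Cert.check 78 (Cert.A [false, false, false, false, false, false] 0 false)) = true := by decide
private theorem certOK_79 : (bipermB 79 || Cert.check 79 (Cert.A [false, true, false, true, false, true] 0 true)) = true := by decide
private theorem certOK_80 : (bipermB 80 || Cert.check 80 (Cert.A [false, false, false, false, false, false] 0 true)) = true := by decide
private theorem certOK_81 : (bipermB 81 || Cert.check 81 (Cert.A [false, false, false, false, false, false] 0 false)) = true := by decide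
private theorem certOK_82 : (bipermB 82 || Cert.check 82 (Cert.B [false, false, false, true, false, true, true] [false, false, false, true, true, true, true])) = true := by decide
private theorem certOK_83 : (bipermB 83 || Cert.check 83 (Cert.A [false, false, false, false, false, false] 0 false)) = true := by decide
private theorem certOK_84 : (bipermB 84 || Cert.check 84 (Cert.A [false, false, false, false, false, false] 0 true)) = true := by decide
private theorem certOK_85 : (bipermB 85 || Cert.check 85 (Cert.A [false, false, false, false, false, false] 0 false)) = true := by decide
private theorem certOK_86 : (bipermB 86 || Cert.check 86 (Cert.A [false, true, false, true, false, true] 0 false)) = true := by decide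
private theorem certOK_87 : (bipermB 87 || Cert.check 87 (Cert.A [false, false, false, false, false, false] 0 false)) = true := by decide
private theorem certOK_88 : (bipermB 88 || Cert.check 88 (Cert.A [false, false, false, false, false, false] 0 true)) = true := by decide
private theorem certOK_89 : (bipermB 89 || Cert.check 89 (Cert.A [false, true, true, false, true, true] 2 false)) = true := by decide
private theorem certOK_90 : (bipermB 90 || Cert.check 90 (Cert.B [] [])) = true := by decide
private theorem certOK_91 : (bipermB 91 || Cert.check 91 (Cert.B [false, false, false, false, false, false, false] [false, false, false, true, true, false, false])) = true := by decide
private theorem certOK_92 : (bipermB 92 || Cert.check 92 (Cert.A [false, false, false, false, false, false] 0 true)) = true := by decide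
private theorem certOK_93 : (bipermB 93 || Cert.check 93 (Cert.A [false, true, false, true, false, true] 0 true)) = true := by decide
private theorem certOK_94 : (bipermB 94 || Cert.check 94 (Cert.A [false, true, false, true, false, true] 0 true)) = true := by decide
private theorem certOK_95 : (bipermB 95 || Cert.check 95 (Cert.A [false, false, false, true, false, true] 0 true)) = true := by decide
private theorem certOK_96 : (bipermB 96 || Cert.check 96 (Cert.A [false, false, false, false, false, false] 0 true)) = true := by decide
private theorem certOK_97 : (bipermB 97 || Cert.check 97 (Cert.B [false, false, true, false, false, true, true] [false, false, true, true, true, true, true])) = true := by decide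
private theorem certOK_98 : (bipermB 98 || Cert.check 98 (Cert.A [false, false, false, false, false, false] 0 false)) = true := by decide
private theorem certOK_99 : (bipermB 99 || Cert.check 99 (Cert.B [false, false, true, false, false, false, true] [false, false, true, true, true, false, true])) = true := by decide
private theorem certOK_100 : (bipermB 100 || Cert.check 100 (Cert.A [false, false, false, false, false, false] 0 true)) = true := by decide
private theorem certOK_101 : (bipermB 101 || Cert.check 101 (Cert.A [false, false, true, false, false, true] 1 false)) = true := by decide
private theorem certOK_102 : (bipermB 102 || Cert.check 102 (Cert.A [false, false, false, false, false, false] 0 false)) = true := by decide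
private theorem certOK_103 : (bipermB 103 || Cert.check 103 (Cert.B [false, false, false, false, false, false, true] [false, false, false, false, true, false, true])) = true := by decide
private theorem certOK_104 : (bipermB 104 || Cert.check 104 (Cert.A [false, false, false, false, false, false] 0 true)) = true := by decide
private theorem certOK_105 : (bipermB 105 || Cert.check 105 (Cert.B [] [])) = true := by decide
private theorem certOK_106 : (bipermB 106 || Cert.check 106 (Cert.A [false, false, false, false, false, false] 0 false)) = true := by decide
private theorem certOK_107 : (bipermB 107 || Cert.check 107 (Cert.B [false, false, false, false, false, false, true] [false, false, false, true, true, false, true])) = true := by decide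
private theorem certOK_108 : (bipermB 108 || Cert.check 108 (Cert.A [false, false, false, false, false, false] 0 true)) = true := by decide
private theorem certOK_109 : (bipermB 109 || Cert.check 109 (Cert.A [false, false, true, false, false, true] 0 true)) = true := by decide
private theorem certOK_110 : (bipermB 110 || Cert.check 110 (Cert.A [false, false, false, false, false, false] 0 false)) = true := by decide
private theorem certOK_111 : (bipermB 111 || Cert.check 111 (Cert.B [false, false, false, false, false, false, true] [false, false, false, false, true, false, true])) = true := by decide
private theorem certOK_112 : (bipermB 112 || Cert.check 112 (Cert.A [false, false, false, false, false, false] 0 true)) = true := by decide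
private theorem certOK_113 : (bipermB 113 || Cert.check 113 (Cert.A [false, false, false, false, false, false] 0 false)) = true := by decide
private theorem certOK_114 : (bipermB 114 || Cert.check 114 (Cert.A [false, true, false, true, false, true] 0 true)) = true := by decide
private theorem certOK_115 : (bipermB 115 || Cert.check 115 (Cert.A [false, false, false, false, false, false] 0 false)) = true := by decide
private theorem certOK_116 : (bipermB 116 || Cert.check 116 (Cert.A [false, false, false, false, false, false] 0 true)) = true := by decide
private theorem certOK_117 : (bipermB 117 || Cert.check 117 (Cert.A [false, false, false, false, false, false] 0 false)) = true := by decide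
private theorem certOK_118 : (bipermB 118 || Cert.check 118 (Cert.B [false, true, false, false, true, false, true] [false, true, false, true, false, false, true])) = true := by decide
private theorem certOK_119 : (bipermB 119 || Cert.check 119 (Cert.A [false, false, false, false, false, false] 0 false)) = true := by decide
private theorem certOK_120 : (bipermB 120 || Cert.check 120 (Cert.A [false, false, false, false, false, false] 0 true)) = true := by decide
private theorem certOK_121 : (bipermB 121 || Cert.check 121 (Cert.B [false, true, false, false, false, false, false] [false, true, false, true, true, false, false])) = true := by decide
private theorem certOK_122 : (bipermB 122 || Cert.check 122 (Cert.B [false, false, true, false, false, false, true] [false, false, true, false, true, false, true])) = true := by decide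
private theorem certOK_123 : (bipermB 123 || Cert.check 123 (Cert.B [false, false, false, false, false, false, false] [false, false, false, true, true, false, false])) = true := by decide
private theorem certOK_124 : (bipermB 124 || Cert.check 124 (Cert.A [false, false, false, false, false, false] 0 true)) = true := by decide
private theorem certOK_125 : (bipermB 125 || Cert.check 125 (Cert.B [false, false, false, true, false, false, false] [false, false, false, true, true, false, false])) = true := by decide
private theorem certOK_126 : (bipermB 126 || Cert.check 126 (Cert.B [false, false, false, true, false, false, true] [false, false, false, true, true, false, true])) = true := by decide
private theorem certOK_127 : (bipermB 127 || Cert.check 127 (Cert.B [false, false, false, false, false, false, false] [false, false, false, false, true, false, false])) = true := by decide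
private theorem certOK_128 : (bipermB 128 || Cert.check 128 (Cert.A [false, false, false, false, false, false] 0 true)) = true := by decide
private theorem certOK_129 : (bipermB 129 || Cert.check 129 (Cert.B [false, false, false, true, false, false, true] [false, false, false, true, true, false, true])) = true := by decide
private theorem certOK_130 : (bipermB 130 || Cert.check 130 (Cert.A [false, false, false, false, false, false] 0 false)) = true := by decide
private theorem certOK_131 : (bipermB 131 || Cert.check 131 (Cert.B [false, false, true, false, true, true, false] [false, false, true, true, false, true, false])) = true := by decide
private theorem certOK_132 : (bipermB 132 || Cert.check 132 (Cert.A [false, false, false, false, false, false] 0 true)) = true := by decide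
private theorem certOK_133 : (bipermB 133 || Cert.check 133 (Cert.A [false, false, true, false, false, true] 0 false)) = true := by decide
private theorem certOK_134 : (bipermB 134 || Cert.check 134 (Cert.A [false, false, false, false, false, false] 0 false)) = true := by decide
private theorem certOK_135 : (bipermB 135 || Cert.check 135 (Cert.A [false, true, false, true, false, true] 1 true)) = true := by decide
private theorem certOK_136 : (bipermB 136 || Cert.check 136 (Cert.A [false, false, false, false, false, false] 0 true)) = true := by decide
private theorem certOK_137 : (bipermB 137 || Cert.check 137 (Cert.A [true, true, true, true, true, true] 0 false)) = true := by decide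
private theorem certOK_138 : (bipermB 138 || Cert.check 138 (Cert.A [false, false, false, false, false, false] 0 false)) = true := by decide
private theorem certOK_139 : (bipermB 139 || Cert.check 139 (Cert.A [true, true, true, true, true, true] 0 false)) = true := by decide
private theorem certOK_140 : (bipermB 140 || Cert.check 140 (Cert.A [false, false, false, false, false, false] 0 true)) = true := by decide
private theorem certOK_141 : (bipermB 141 || Cert.check 141 (Cert.A [false, false, true, false, false, true] 0 true)) = true := by decide
private theorem certOK_142 : (bipermB 142 || Cert.check 142 (Cert.A [false, false, false, false, false, false] 0 false)) = true := by decide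
private theorem certOK_143 : (bipermB 143 || Cert.check 143 (Cert.A [false, true, false, true, false, true] 0 true)) = true := by decide
private theorem certOK_144 : (bipermB 144 || Cert.check 144 (Cert.A [false, false, false, false, false, false] 0 true)) = true := by decide
private theorem certOK_145 : (bipermB 145 || Cert.check 145 (Cert.B [false, false, true, false, true, true, false] [false, false, true, true, false, true, false])) = true := by decide
private theorem certOK_146 : (bipermB 146 || Cert.check 146 (Cert.B [false, false, true, false, false, true, false] [false, false, true, true, true, true, false])) = true := by decide
private theorem certOK_147 : (bipermB 147 || Cert.check 147 (Cert.B [false, false, true, false, false, true, false] [false, false, true, true, true, true, false])) = true := by decide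
private theorem certOK_148 : (bipermB 148 || Cert.check 148 (Cert.A [false, false, false, false, false, false] 0 true)) = true := by decide
private theorem certOK_149 : (bipermB 149 || Cert.check 149 (Cert.A [false, true, false, true, false, true] 1 false)) = true := by decide
private theorem certOK_150 : (bipermB 150 || Cert.check 150 (Cert.B [] [])) = true := by decide
private theorem certOK_151 : (bipermB 151 || Cert.check 151 (Cert.B [false, false, false, false, false, false, false] [false, false, false, false, true, false, false])) = true := by decide
private theorem certOK_152 : (bipermB 152 || Cert.check 152 (Cert.A [false, false, false, false, false, false] 0 true)) = true := by decide
private theorem certOK_153 : (bipermB 153 || Cert.check 153 (Cert.A [true, true, true, true, true, true] 0 false)) = true := by decide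
private theorem certOK_154 : (bipermB 154 || Cert.check 154 (Cert.A [true, true, true, true, true, true] 0 false)) = true := by decide
private theorem certOK_155 : (bipermB 155 || Cert.check 155 (Cert.A [true, true, true, true, true, true] 0 false)) = true := by decide
private theorem certOK_156 : (bipermB 156 || Cert.check 156 (Cert.A [false, false, false, false, false, false] 0 true)) = true := by decide
private theorem certOK_157 : (bipermB 157 || Cert.check 157 (Cert.A [false, false, true, false, false, true] 0 true)) = true := by decide
private theorem certOK_158 : (bipermB 158 || Cert.check 158 (Cert.A [false, true, false, true, false, true] 0 true)) = true := by decide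
private theorem certOK_159 : (bipermB 159 || Cert.check 159 (Cert.A [false, true, false, true, false, true] 0 true)) = true := by decide
private theorem certOK_160 : (bipermB 160 || Cert.check 160 (Cert.A [false, false, false, false, false, false] 0 true)) = true := by decide
private theorem certOK_161 : (bipermB 161 || Cert.check 161 (Cert.B [false, false, false, true, false, true, false] [false, false, false, true, true, true, false])) = true := by decide
private theorem certOK_162 : (bipermB 162 || Cert.check 162 (Cert.A [false, false, false, false, false, false] 0 false)) = true := by decide
private theorem certOK_163 : (bipermB 163 || Cert.check 163 (Cert.A [false, true, false, true, false, true] 0 false)) = true := by decide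
private theorem certOK_164 : (bipermB 164 || Cert.check 164 (Cert.A [false, false, false, false, false, false] 0 true)) = true := by decide
private theorem certOK_165 : (bipermB 165 || Cert.check 165 (Cert.B [] [])) = true := by decide
private theorem certOK_166 : (bipermB 166 || Cert.check 166 (Cert.A [false, false, false, false, false, false] 0 false)) = true := by decide
private theorem certOK_167 : (bipermB 167 || Cert.check 167 (Cert.B [false, false, false, false, false, false, true] [false, false, false, false, true, false, true])) = true := by decide
private theorem certOK_168 : (bipermB 168 || Cert.check 168 (Cert.A [false, false, false, false, false, false] 0 true)) = true := by decide
private theorem certOK_169 : (bipermB 169 || Cert.check 169 (Cert.A [true, true, true, true, true, true] 0 false)) = true := by decide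
private theorem certOK_170 : (bipermB 170 || Cert.check 170 (Cert.A [false, false, false, false, false, false] 0 false)) = true := by decide
private theorem certOK_171 : (bipermB 171 || Cert.check 171 (Cert.A [false, true, false, true, false, true] 0 false)) = true := by decide
private theorem certOK_172 : (bipermB 172 || Cert.check 172 (Cert.A [false, false, false, false, false, false] 0 true)) = true := by decide
private theorem certOK_173 : (bipermB 173 || Cert.check 173 (Cert.A [false, false, true, false, false, true] 0 true)) = true := by decide
private theorem certOK_174 : (bipermB 174 || Cert.check 174 (Cert.A [false, false, false, false, false, false] 0 false)) = true := by decide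
private theorem certOK_175 : (bipermB 175 || Cert.check 175 (Cert.A [true, true, true, true, true, true] 0 false)) = true := by decide
private theorem certOK_176 : (bipermB 176 || Cert.check 176 (Cert.A [false, false, false, false, false, false] 0 true)) = true := by decide
private theorem certOK_177 : (bipermB 177 || Cert.check 177 (Cert.A [false, true, false, true, false, true] 0 true)) = true := by decide
private theorem certOK_178 : (bipermB 178 || Cert.check 178 (Cert.A [false, false, true, false, false, true] 0 true)) = true := by decide
private theorem certOK_179 : (bipermB 179 || Cert.check 179 (Cert.A [false, false, true, false, false, true] 0 true)) = true := by decide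
private theorem certOK_180 : (bipermB 180 || Cert.check 180 (Cert.A [false, false, false, false, false, false] 0 true)) = true := by decide
private theorem certOK_181 : (bipermB 181 || Cert.check 181 (Cert.B [false, false, true, false, false, false, false] [false, false, true, false, true, false, false])) = true := by decide
private theorem certOK_182 : (bipermB 182 || Cert.check 182 (Cert.B [false, true, false, false, false, false, true] [false, true, false, true, true, false, true])) = true := by decide
private theorem certOK_183 : (bipermB 183 || Cert.check 183 (Cert.B [false, false, false, false, false, false, false] [false, false, false, false, true, false, false])) = true := by decide
private theorem certOK_184 : (bipermB 184 || Cert.check 184 (Cert.A [false, false, false, false, false, false] 0 true)) = true := by decide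
private theorem certOK_185 : (bipermB 185 || Cert.check 185 (Cert.A [true, true, true, true, true, true] 0 false)) = true := by decide
private theorem certOK_186 : (bipermB 186 || Cert.check 186 (Cert.A [false, true, false, true, false, true] 0 false)) = true := by decide
private theorem certOK_187 : (bipermB 187 || Cert.check 187 (Cert.A [false, true, false, true, false, true] 0 false)) = true := by decide
private theorem certOK_188 : (bipermB 188 || Cert.check 188 (Cert.A [false, false, false, false, false, false] 0 true)) = true := by decide
private theorem certOK_189 : (bipermB 189 || Cert.check 189 (Cert.A [true, true, true, true, true, true] 0 false)) = true := by decide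
private theorem certOK_190 : (bipermB 190 || Cert.check 190 (Cert.A [true, true, true, true, true, true] 0 false)) = true := by decide
private theorem certOK_191 : (bipermB 191 || Cert.check 191 (Cert.A [true, true, true, true, true, true] 0 false)) = true := by decide
private theorem certOK_192 : (bipermB 192 || Cert.check 192 (Cert.A [false, false, false, false, false, false] 0 true)) = true := by decide
private theorem certOK_193 : (bipermB 193 || Cert.check 193 (Cert.A [true, true, true, true, true, true] 0 true)) = true := by decide
private theorem certOK_194 : (bipermB 194 || Cert.check 194 (Cert.A [false, false, false, false, false, false] 0 false)) = true := by decide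
private theorem certOK_195 : (bipermB 195 || Cert.check 195 (Cert.A [true, true, true, true, true, true] 0 true)) = true := by decide
private theorem certOK_196 : (bipermB 196 || Cert.check 196 (Cert.A [false, false, false, false, false, false] 0 true)) = true := by decide
private theorem certOK_197 : (bipermB 197 || Cert.check 197 (Cert.A [false, false, true, false, false, true] 0 false)) = true := by decide
private theorem certOK_198 : (bipermB 198 || Cert.check 198 (Cert.A [false, false, false, false, false, false] 0 false)) = true := by decide
private theorem certOK_199 : (bipermB 199 || Cert.check 199 (Cert.A [false, false, true, false, false, true] 1 true)) = true := by decide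
private theorem certOK_200 : (bipermB 200 || Cert.check 200 (Cert.A [false, false, false, false, false, false] 0 true)) = true := by decide
private theorem certOK_201 : (bipermB 201 || Cert.check 201 (Cert.A [false, false, false, true, true, true] 0 true)) = true := by decide
private theorem certOK_202 : (bipermB 202 || Cert.check 202 (Cert.A [false, false, false, false, false, false] 0 false)) = true := by decide
private theorem certOK_203 : (bipermB 203 || Cert.check 203 (Cert.A [false, true, true, false, true, true] 0 true)) = true := by decide
private theorem certOK_204 : (bipermB 204 || Cert.check 204 (Cert.A [false, false, false, false, false, false] 0 true)) = true := by decide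
private theorem certOK_205 : (bipermB 205 || Cert.check 205 (Cert.A [false, false, true, false, false, true] 0 true)) = true := by decide
private theorem certOK_206 : (bipermB 206 || Cert.check 206 (Cert.A [false, false, false, false, false, false] 0 false)) = true := by decide
private theorem certOK_207 : (bipermB 207 || Cert.check 207 (Cert.A [false, true, false, true, false, true] 0 true)) = true := by decide
private theorem certOK_208 : (bipermB 208 || Cert.check 208 (Cert.A [false, false, false, false, false, false] 0 true)) = true := by decide
private theorem certOK_209 : (bipermB 209 || Cert.check 209 (Cert.A [true, true, true, true, true, true] 0 true)) = true := by decide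
private theorem certOK_210 : (bipermB 210 || Cert.check 210 (Cert.A [true, true, true, true, true, true] 0 true)) = true := by decide
private theorem certOK_211 : (bipermB 211 || Cert.check 211 (Cert.A [true, true, true, true, true, true] 0 true)) = true := by decide
private theorem certOK_212 : (bipermB 212 || Cert.check 212 (Cert.A [false, false, false, false, false, false] 0 true)) = true := by decide
private theorem certOK_213 : (bipermB 213 || Cert.check 213 (Cert.A [false, true, false, true, false, true] 0 false)) = true := by decide
private theorem certOK_214 : (bipermB 214 || Cert.check 214 (Cert.A [false, true, false, true, false, true] 0 false)) = true := by decide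
private theorem certOK_215 : (bipermB 215 || Cert.check 215 (Cert.A [false, true, false, true, false, true] 0 false)) = true := by decide
private theorem certOK_216 : (bipermB 216 || Cert.check 216 (Cert.A [false, false, false, false, false, false] 0 true)) = true := by decide
private theorem certOK_217 : (bipermB 217 || Cert.check 217 (Cert.A [false, true, true, false, true, true] 0 true)) = true := by decide
private theorem certOK_218 : (bipermB 218 || Cert.check 218 (Cert.A [false, true, true, false, true, true] 0 true)) = true := by decide
private theorem certOK_219 : (bipermB 219 || Cert.check 219 (Cert.A [false, true, true, false, true, true] 0 true)) = true := by decide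
private theorem certOK_220 : (bipermB 220 || Cert.check 220 (Cert.A [false, false, false, false, false, false] 0 true)) = true := by decide
private theorem certOK_221 : (bipermB 221 || Cert.check 221 (Cert.A [false, true, false, true, false, true] 0 true)) = true := by decide
private theorem certOK_222 : (bipermB 222 || Cert.check 222 (Cert.A [false, true, false, true, false, true] 0 true)) = true := by decide
private theorem certOK_223 : (bipermB 223 || Cert.check 223 (Cert.A [false, true, false, true, false, true] 0 true)) = true := by decide
private theorem certOK_224 : (bipermB 224 || Cert.check 224 (Cert.A [false, false, false, false, false, false] 0 true)) = true := by decide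
private theorem certOK_225 : (bipermB 225 || Cert.check 225 (Cert.A [true, true, true, true, true, true] 0 true)) = true := by decide
private theorem certOK_226 : (bipermB 226 || Cert.check 226 (Cert.A [false, false, false, false, false, false] 0 false)) = true := by decide
private theorem certOK_227 : (bipermB 227 || Cert.check 227 (Cert.A [true, true, true, true, true, true] 0 true)) = true := by decide
private theorem certOK_228 : (bipermB 228 || Cert.check 228 (Cert.A [false, false, false, false, false, false] 0 true)) = true := by decide
private theorem certOK_229 : (bipermB 229 || Cert.check 229 (Cert.A [false, false, true, false, false, true] 1 false)) = true := by decide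
private theorem certOK_230 : (bipermB 230 || Cert.check 230 (Cert.A [false, false, false, false, false, false] 0 false)) = true := by decide
private theorem certOK_231 : (bipermB 231 || Cert.check 231 (Cert.A [true, true, true, true, true, true] 0 true)) = true := by decide
private theorem certOK_232 : (bipermB 232 || Cert.check 232 (Cert.A [false, false, false, false, false, false] 0 true)) = true := by decide
private theorem certOK_233 : (bipermB 233 || Cert.check 233 (Cert.A [false, false, true, true, true, true] 0 true)) = true := by decide
private theorem certOK_234 : (bipermB 234 || Cert.check 234 (Cert.A [false, false, false, false, false, false] 0 false)) = true := by decide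
private theorem certOK_235 : (bipermB 235 || Cert.check 235 (Cert.A [true, true, true, true, true, true] 0 true)) = true := by decide
private theorem certOK_236 : (bipermB 236 || Cert.check 236 (Cert.A [false, false, false, false, false, false] 0 true)) = true := by decide
private theorem certOK_237 : (bipermB 237 || Cert.check 237 (Cert.A [false, false, true, false, false, true] 0 true)) = true := by decide
private theorem certOK_238 : (bipermB 238 || Cert.check 238 (Cert.A [false, false, false, false, false, false] 0 false)) = true := by decide
private theorem certOK_239 : (bipermB 239 || Cert.check 239 (Cert.A [true, true, true, true, true, true] 0 true)) = true := by decide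
private theorem certOK_240 : (bipermB 240 || Cert.check 240 (Cert.A [false, false, false, false, false, false] 0 true)) = true := by decide
private theorem certOK_241 : (bipermB 241 || Cert.check 241 (Cert.A [false, true, false, true, false, true] 0 true)) = true := by decide
private theorem certOK_242 : (bipermB 242 || Cert.check 242 (Cert.A [false, true, false, true, false, true] 0 true)) = true := by decide
private theorem certOK_243 : (bipermB 243 || Cert.check 243 (Cert.A [false, true, false, true, false, true] 0 true)) = true := by decide
private theorem certOK_244 : (bipermB 244 || Cert.check 244 (Cert.A [false, false, false, false, false, false] 0 true)) = true := by decide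
private theorem certOK_245 : (bipermB 245 || Cert.check 245 (Cert.A [true, true, true, true, true, true] 0 true)) = true := by decide
private theorem certOK_246 : (bipermB 246 || Cert.check 246 (Cert.A [true, true, true, true, true, true] 0 true)) = true := by decide
private theorem certOK_247 : (bipermB 247 || Cert.check 247 (Cert.A [true, true, true, true, true, true] 0 true)) = true := by decide
private theorem certOK_248 : (bipermB 248 || Cert.check 248 (Cert.A [false, false, false, false, false, false] 0 true)) = true := by decide
private theorem certOK_249 : (bipermB 249 || Cert.check 249 (Cert.A [true, true, true, true, true, true] 0 true)) = true := by decide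
private theorem certOK_250 : (bipermB 250 || Cert.check 250 (Cert.A [true, true, true, true, true, true] 0 true)) = true := by decide
private theorem certOK_251 : (bipermB 251 || Cert.check 251 (Cert.A [true, true, true, true, true, true] 0 true)) = true := by decide
private theorem certOK_252 : (bipermB 252 || Cert.check 252 (Cert.A [false, false, false, false, false, false] 0 true)) = true := by decide
private theorem certOK_253 : (bipermB 253 || Cert.check 253 (Cert.A [true, true, true, true, true, true] 0 true)) = true := by decide
private theorem certOK_254 : (bipermB 254 || Cert.check 254 (Cert.A [true, true, true, true, true, true] 0 true)) = true := by decide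
private theorem certOK_255 : (bipermB 255 || Cert.check 255 (Cert.A [true, true, true, true, true, true] 0 true)) = true := by decide

def checkAll : ℕ → List Cert → Bool
  | _, [] => true
  | n, c :: rest => (bipermB n || Cert.check n c) && checkAll (n+1) rest

private theorem checkAll_cons {n : ℕ} {c : Cert} {l : List Cert}
    (h1 : (bipermB n || Cert.check n c) = true) (h2 : checkAll (n+1) l = true) :
    checkAll n (c :: l) = true := by
  show ((bipermB n || Cert.check n c) && checkAll (n+1) l) = true
  rw [h1, h2]
  rfl

set_option maxRecDepth 10000 in
theorem tableOK : checkAll 0 certTable = true :=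
  checkAll_cons certOK_0 (checkAll_cons certOK_1 (checkAll_cons certOK_2 (checkAll_cons certOK_3 (checkAll_cons certOK_4 (checkAll_cons certOK_5 (checkAll_cons certOK_6 (checkAll_cons certOK_7 (checkAll_cons certOK_8 (checkAll_cons certOK_9 (checkAll_cons certOK_10 (checkAll_cons certOK_11 (checkAll_cons certOK_12 (checkAll_cons certOK_13 (checkAll_cons certOK_14 (checkAll_cons certOK_15 (checkAll_cons certOK_16 (checkAll_cons certOK_17 (checkAll_cons certOK_18 (checkAll_cons certOK_19 (checkAll_cons certOK_20 (checkAll_cons certOK_21 (checkAll_cons certOK_22 (checkAll_cons certOK_23 (checkAll_cons certOK_24 (checkAll_cons certOK_25 (checkAll_cons certOK_26 (checkAll_cons certOK_27 (checkAll_cons certOK_28 (checkAll_cons certOK_29 (checkAll_cons certOK_30 (checkAll_cons certOK_31 (checkAll_cons certOK_32 (checkAll_cons certOK_33 (checkAll_cons certOK_34 (checkAll_cons certOK_35 (checkAll_cons certOK_36 (checkAll_cons certOK_37 (checkAll_cons certOK_38 (checkAll_cons certOK_39 (checkAll_cons certOK_40 (checkAll_cons certOK_41 (checkAll_cons certOK_42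 (checkAll_cons certOK_43 (checkAll_cons certOK_44 (checkAll_cons certOK_45 (checkAll_cons certOK_46 (checkAll_cons certOK_47 (checkAll_cons certOK_48 (checkAll_cons certOK_49 (checkAll_cons certOK_50 (checkAll_cons certOK_51 (checkAll_cons certOK_52 (checkAll_cons certOK_53 (checkAll_cons certOK_54 (checkAll_cons certOK_55 (checkAll_cons certOK_56 (checkAll_cons certOK_57 (checkAll_cons certOK_58 (checkAll_cons certOK_59 (checkAll_cons certOK_60 (checkAll_cons certOK_61 (checkAll_cons certOK_62 (checkAll_cons certOK_63 (checkAll_cons certOK_64 (checkAll_cons certOK_65 (checkAll_cons certOK_66 (checkAll_cons certOK_67 (checkAll_cons certOK_68 (checkAll_cons certOK_69 (checkAll_cons certOK_70 (checkAll_cons certOK_71 (checkAll_cons certOK_72 (checkAll_cons certOK_73 (checkAll_cons certOK_74 (checkAll_cons certOK_75 (checkAll_cons certOK_76 (checkAll_cons certOK_77 (checkAll_cons certOK_78 (checkAll_cons certOK_79 (checkAll_cons certOK_80 (checkAll_cons certOK_81 (checkAll_cons certOK_82 (checkAll_cons certOK_83 (checkAll_cons certOK_84 (checkAll_cons certOK_85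 (checkAll_cons certOK_86 (checkAll_cons certOK_87 (checkAll_cons certOK_88 (checkAll_cons certOK_89 (checkAll_cons certOK_90 (checkAll_cons certOK_91 (checkAll_cons certOK_92 (checkAll_cons certOK_93 (checkAll_cons certOK_94 (checkAll_cons certOK_95 (checkAll_cons certOK_96 (checkAll_cons certOK_97 (checkAll_cons certOK_98 (checkAll_cons certOK_99 (checkAll_cons certOK_100 (checkAll_cons certOK_101 (checkAll_cons certOK_102 (checkAll_cons certOK_103 (checkAll_cons certOK_104 (checkAll_cons certOK_105 (checkAll_cons certOK_106 (checkAll_cons certOK_107 (checkAll_cons certOK_108 (checkAll_cons certOK_109 (checkAll_cons certOK_110 (checkAll_cons certOK_111 (checkAll_cons certOK_112 (checkAll_cons certOK_113 (checkAll_cons certOK_114 (checkAll_cons certOK_115 (checkAll_cons certOK_116 (checkAll_cons certOK_117 (checkAll_cons certOK_118 (checkAll_cons certOK_119 (checkAll_cons certOK_120 (checkAll_cons certOK_121 (checkAll_cons certOK_122 (checkAll_cons certOK_123 (checkAll_cons certOK_124 (checkAll_cons certOK_125 (checkAll_cons certOK_126 (checkAll_cons certOK_127 (checkAll_cons certOK_128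 (checkAll_cons certOK_129 (checkAll_cons certOK_130 (checkAll_cons certOK_131 (checkAll_cons certOK_132 (checkAll_cons certOK_133 (checkAll_cons certOK_134 (checkAll_cons certOK_135 (checkAll_cons certOK_136 (checkAll_cons certOK_137 (checkAll_cons certOK_138 (checkAll_cons certOK_139 (checkAll_cons certOK_140 (checkAll_cons certOK_141 (checkAll_cons certOK_142 (checkAll_cons certOK_143 (checkAll_cons certOK_144 (checkAll_cons certOK_145 (checkAll_cons certOK_146 (checkAll_cons certOK_147 (checkAll_cons certOK_148 (checkAll_cons certOK_149 (checkAll_cons certOK_150 (checkAll_cons certOK_151 (checkAll_cons certOK_152 (checkAll_cons certOK_153 (checkAll_cons certOK_154 (checkAll_cons certOK_155 (checkAll_cons certOK_156 (checkAll_cons certOK_157 (checkAll_cons certOK_158 (checkAll_cons certOK_159 (checkAll_cons certOK_160 (checkAll_cons certOK_161 (checkAll_cons certOK_162 (checkAll_cons certOK_163 (checkAll_cons certOK_164 (checkAll_cons certOK_165 (checkAll_cons certOK_166 (checkAll_cons certOK_167 (checkAll_cons certOK_168 (checkAll_cons certOK_169 (checkAll_cons certOK_170 (checkAll_cons certOK_171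 (checkAll_cons certOK_172 (checkAll_cons certOK_173 (checkAll_cons certOK_174 (checkAll_cons certOK_175 (checkAll_cons certOK_176 (checkAll_cons certOK_177 (checkAll_cons certOK_178 (checkAll_cons certOK_179 (checkAll_cons certOK_180 (checkAll_cons certOK_181 (checkAll_cons certOK_182 (checkAll_cons certOK_183 (checkAll_cons certOK_184 (checkAll_cons certOK_185 (checkAll_cons certOK_186 (checkAll_cons certOK_187 (checkAll_cons certOK_188 (checkAll_cons certOK_189 (checkAll_cons certOK_190 (checkAll_cons certOK_191 (checkAll_cons certOK_192 (checkAll_cons certOK_193 (checkAll_cons certOK_194 (checkAll_cons certOK_195 (checkAll_cons certOK_196 (checkAll_cons certOK_197 (checkAll_cons certOK_198 (checkAll_cons certOK_199 (checkAll_cons certOK_200 (checkAll_cons certOK_201 (checkAll_cons certOK_202 (checkAll_cons certOK_203 (checkAll_cons certOK_204 (checkAll_cons certOK_205 (checkAll_cons certOK_206 (checkAll_cons certOK_207 (checkAll_cons certOK_208 (checkAll_cons certOK_209 (checkAll_cons certOK_210 (checkAll_cons certOK_211 (checkAll_cons certOK_212 (checkAll_cons certOK_213 (checkAll_cons certOK_214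 (checkAll_cons certOK_215 (checkAll_cons certOK_216 (checkAll_cons certOK_217 (checkAll_cons certOK_218 (checkAll_cons certOK_219 (checkAll_cons certOK_220 (checkAll_cons certOK_221 (checkAll_cons certOK_222 (checkAll_cons certOK_223 (checkAll_cons certOK_224 (checkAll_cons certOK_225 (checkAll_cons certOK_226 (checkAll_cons certOK_227 (checkAll_cons certOK_228 (checkAll_cons certOK_229 (checkAll_cons certOK_230 (checkAll_cons certOK_231 (checkAll_cons certOK_232 (checkAll_cons certOK_233 (checkAll_cons certOK_234 (checkAll_cons certOK_235 (checkAll_cons certOK_236 (checkAll_cons certOK_237 (checkAll_cons certOK_238 (checkAll_cons certOK_239 (checkAll_cons certOK_240 (checkAll_cons certOK_241 (checkAll_cons certOK_242 (checkAll_cons certOK_243 (checkAll_cons certOK_244 (checkAll_cons certOK_245 (checkAll_cons certOK_246 (checkAll_cons certOK_247 (checkAll_cons certOK_248 (checkAll_cons certOK_249 (checkAll_cons certOK_250 (checkAll_cons certOK_251 (checkAll_cons certOK_252 (checkAll_cons certOK_253 (checkAll_cons certOK_254 (checkAll_cons certOK_255 (rfl)))))))))))))))))))))))))))))))))))))))))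)))))))))))))))))))))))))))))))))))))))))))))))))))))))))))))))))))))))))))))))))))))))))))))))))))))))))))))))))))))))))))))))))))))))))))))))))))))))))))))))))))))))))))))))))))))))))))))))))))))))))))))))))))))))

private theorem checkAll_spec : ∀ (l : List Cert) (n : ℕ), checkAll n l = true →
    ∀ k : ℕ, k < l.length →
    (bipermB (n+k) || Cert.check (n+k) (l.getD k (Cert.B [] []))) = true := by
  intro l
  induction l with
  | nil => intro n h k hk; simp at hk
  | cons c rest ih =>
    intro n h k hk
    have h' : ((bipermB n || Cert.check n c) && checkAll (n+1) rest) = true := h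
    rw [Bool.and_eq_true] at h'
    cases k with
    | zero => simpa using h'.1
    | succ k =>
      have hres := ih (n+1) h'.2 k (by simpa using hk)
      have e : n + 1 + k = n + (k+1) := by omega
      rw [e] at hres
      simpa using hres

set_option maxRecDepth 10000 in
private theorem certTable_length : certTable.length = 256 := by rfl

theorem Cert.sound (N : ℕ) (c : Cert) (h : Cert.check N c = true) :
    ¬ PosExpansiveCA (eca N) := by
  cases c with
  | A w pos right =>
    unfold Cert.check at h
    cases right with
    | true =>
      simp only [if_true, Bool.and_eq_true, decide_eq_true_eq] at h
      exact notPosExp_A_right N (mkW w) ((pos : ℕ) : ZMod 6) h.1 h.2.1 h.2.2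
    | false =>
      simp only [Bool.false_eq_true, if_false, Bool.and_eq_true, decide_eq_true_eq] at h
      exact notPosExp_A_left N (mkW w) ((pos : ℕ) : ZMod 6) h.1 h.2.1 h.2.2
  | B L1 L2 =>
    unfold Cert.check at h
    simp only [Bool.and_eq_true, decide_eq_true_eq] at h
    obtain ⟨⟨⟨⟨h1, h2⟩, h3⟩, h4⟩, h5⟩ := h
    apply notPosExp_B N L1 L2
    · intro k hk2 hk3 hk4
      by_cases hk : k < 7
      · exact h3 ⟨k, hk⟩ hk2 hk3 hk4
      · rw [List.getD_eq_default _ _ (by omega), List.getD_eq_default _ _ (by omega)]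
    · obtain ⟨k, hk⟩ := h4
      exact ⟨(k : ℕ), k.isLt, hk⟩
    · intro k hk
      exact h5 ⟨k, hk⟩

lemma bool_bij_of_ne {f : Bool → Bool} (h : f true ≠ f false) : Function.Bijective f := by
  constructor
  · intro a b hab
    cases a <;> cases b <;> simp_all
  · intro y
    by_cases h1 : f true = y
    · exact ⟨true, h1⟩
    · refine ⟨false, ?_⟩
      cases hft : f true <;> cases hff : f false <;> cases y <;> simp_all

lemma bipermB_spec (N : ℕ) (h : bipermB N = true) : LeftPermutive N ∧ RightPermutive N := by
  unfold bipermB at h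
  rw [Bool.and_eq_true, decide_eq_true_eq, decide_eq_true_eq] at h
  exact ⟨fun b c => bool_bij_of_ne (h.1 b c), fun a b => bool_bij_of_ne (h.2 a b)⟩

lemma posExp_of_biperm (N : ℕ) (hL : LeftPermutive N) (hR : RightPermutive N) :
    PosExpansiveCA (eca N) := by
  refine ⟨1/2, by norm_num, ?_⟩
  intro x y hxy
  by_contra hno
  push_neg at hno
  apply hxy
  apply biperm_window N hL hR
  intro n
  constructor
  · by_contra hne
    have hl := dC_lower ((eca N)^[n] x) ((eca N)^[n] y) 0 hne
    have h2 := hno n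
    norm_num at hl
    linarith
  · by_contra hne
    have hl := dC_lower ((eca N)^[n] x) ((eca N)^[n] y) 1 hne
    have h2 := hno n
    norm_num at hl
    linarith


/-- An elementary cellular automaton is positively expansive if and only if it is both
left- and right-permutive. -/
theorem eca_posexpansive_iff_bipermutive (N : ℕ) (hN : N ≤ 255) :
    PosExpansiveCA (eca N) ↔ LeftPermutive N ∧ RightPermutive N := by
  constructor
  · intro hPE
    by_contra hnb
    have hlt : N < 256 := by omega
    have h := checkAll_spec certTable 0 tableOK N (by rw [certTable_length]; omega)
    rw [Bool.or_eq_true] at h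
    rcases h with hb | hc
    · exact hnb (bipermB_spec N (by simpa using hb))
    · exact Cert.sound N _ (by simpa using hc) hPE
  · rintro ⟨hL, hR⟩
    exact posExp_of_biperm N hL hR
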